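/- Let N > M ≥ 1 be coprime integers with N + M odd, let a, b ∈ ℂ, and let τ : ℤ → ℂ satisfy τ_m ≠ 0 for all m. Define u_m = (τ_m τ_{m+N+1})/(τ_{m+1} τ_{m+N}). Then τ satisfies the bilinear T-system τ_{m+2N+M} τ_m = a τ_{m+2N} τ_{m+M} + b τ_{m+N+M} τ_{m+N} for all m ∈ ℤ if and only if u satisfies the U-system u_m u_{m+1} ⋯ u_{m+N+M−1} = b + a u_{m+M} u_{m+M+1} ⋯ u_{m+N−1} for all m ∈ ℤ. -/

import Mathlib

lemma uProd_telescope (N : ℕ) (τ : ℤ → ℂ) (hτ : ∀ m : ℤ, τ m ≠ 0)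
    (u : ℤ → ℂ)
    (hu : ∀ m : ℤ, u m = τ m * τ (m + N + 1) / (τ (m + 1) * τ (m + N))) :
    ∀ (m : ℤ) (k : ℕ), ∏ i ∈ Finset.range k, u (m + i) =
      τ m * τ (m + k + N) / (τ (m + k) * τ (m + N)) := by
  intro m k
  induction k with
  | zero => simp [div_self, mul_ne_zero (hτ m) (hτ (m + N))]
  | succ k ih =>
    rw [Finset.prod_range_succ, ih, hu]
    push_cast
    have h1 := hτ (m + k)
    have h2 := hτ (m + k + 1)
    have h3 := hτ (m + k + N)
    have h4 := hτ (m + N)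
    simp only [show m + ((k : ℤ) + 1) = m + k + 1 from by ring,
      show m + ((k : ℤ) + 1) + N = m + k + 1 + N from by ring]
    rw [div_mul_div_comm, div_eq_div_iff
      (mul_ne_zero (mul_ne_zero h1 h4) (mul_ne_zero h2 h3)) (mul_ne_zero h2 h4)]
    ring_nf

/-- For coprime `N > M ≥ 1` with `N + M` odd, a nowhere-vanishing
sequence `τ : ℤ → ℂ` satisfies the bilinear T-system
`τ_{m+2N+M} τ_m = a τ_{m+2N} τ_{m+M} + b τ_{m+N+M} τ_{m+N}`
iff `u_m = (τ_m τ_{m+N+1})/(τ_{m+1} τ_{m+N})` satisfies the U-system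
`u_m u_{m+1} ⋯ u_{m+N+M−1} = b + a u_{m+M} ⋯ u_{m+N−1}`. -/
theorem tSystem_iff_uSystem_odd_first
    (N M : ℕ) (hM : 1 ≤ M) (hMN : M < N) (hcop : Nat.Coprime N M)
    (hodd : Odd (N + M)) (a b : ℂ)
    (τ : ℤ → ℂ) (hτ : ∀ m : ℤ, τ m ≠ 0)
    (u : ℤ → ℂ)
    (hu : ∀ m : ℤ, u m = τ m * τ (m + N + 1) / (τ (m + 1) * τ (m + N))) :
    (∀ m : ℤ, τ (m + 2 * N + M) * τ m =
        a * (τ (m + 2 * N) * τ (m + M)) + b * (τ (m + N + M) * τ (m + N))) ↔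
    (∀ m : ℤ, ∏ i ∈ Finset.range (N + M), u (m + i) =
        b + a * ∏ i ∈ Finset.range (N - M), u (m + M + i)) := by
  have hsub : ((N - M : ℕ) : ℤ) = (N : ℤ) - M := by
    exact_mod_cast Int.ofNat_sub hMN.le
  have key : ∀ m : ℤ,
      (∏ i ∈ Finset.range (N + M), u (m + i) =
        b + a * ∏ i ∈ Finset.range (N - M), u (m + M + i)) ↔
      (τ (m + 2 * N + M) * τ m =
        a * (τ (m + 2 * N) * τ (m + M)) + b * (τ (m + N + M) * τ (m + N))) := by
    intro m
    rw [uProd_telescope N τ hτ u hu m (N + M),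
        uProd_telescope N τ hτ u hu (m + M) (N - M)]
    rw [hsub]
    push_cast
    simp only [show m + ((N : ℤ) + M) = m + N + M from by ring,
      show m + (N : ℤ) + N = m + 2 * N from by ring,
      show m + (M : ℤ) + N = m + N + M from by ring,
      show m + (M : ℤ) + ((N : ℤ) - M) = m + N from by ring,
      show m + (M : ℤ) + ((N : ℤ) - M) + N = m + 2 * N from by ring,
      show m + ((N : ℤ) + M) + N = m + 2 * N + M from by ring,
      show m + (N : ℤ) + M + N = m + 2 * N + M from by ring]
    have h1 := hτ (m + N)
    have h2 := hτ (m + N + M)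
    constructor <;> intro h
    · field_simp at h
      have h' : (τ (m + 2 * (N : ℤ) + M) * τ m -
          (a * (τ (m + 2 * (N : ℤ)) * τ (m + M)) + b * (τ (m + (N : ℤ) + M) * τ (m + N)))) *
          (τ (m + (N : ℤ)) * τ (m + (N : ℤ) + M)) = 0 := by
          linear_combination (τ (m + (N : ℤ)) * τ (m + (N : ℤ) + M)) * h
      have h'' := (mul_eq_zero.mp h').resolve_right (mul_ne_zero h1 h2)
      linear_combination h''
    · field_simp
      linear_combination h
  constructor
  · intro h m; exact (key m).2 (h m)
  · intro h m; exact (key m).1 (h m)
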